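/- Let α, c be real with 0 < c² < 1 and c ≠ 0, let b = 1/√(1-c²) (so (1-c²)·b² = 1), let b_uv ≠ 0 and a_vv be real with a_uu = 6·(b²-1)·b_uv, and set A₁ = 1/b_uv; let A₂ be a real number satisfying a_vv·b_uv·A₂² = c² - α² - 4b²c². Define u(ξ) = A₁·sech²(bξ) and v(ξ) = A₂·sech(bξ). Then for all ξ ∈ ℝ: (c²-α²)·u(ξ) - c²·u''(ξ) = a_uu·u(ξ)² + a_vv·v(ξ)² and v(ξ) - (1-c²)·v''(ξ) = 2b_uv·u(ξ)·v(ξ). In particular, u(x - c t), v(x - c t) is an explicit solitary-wave solution of the Klein–Gordon–Boussinesq system with a_uv = b_uu = b_vv = 0. -/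

import Mathlib

open Real

private lemma chb (b x : ℝ) : HasDerivAt (fun ξ : ℝ => Real.cosh (b * ξ)) (b * Real.sinh (b * x)) x := by
  have h := (Real.hasDerivAt_cosh (b * x)).comp x ((hasDerivAt_id x).const_mul b)
  simpa [mul_comm, Function.comp_def] using h

private lemma chne (y : ℝ) : Real.cosh y ≠ 0 := (Real.cosh_pos y).ne'

/-- second derivative of A·sech(bξ) -/
private lemma dd_sech (b A x : ℝ) :
    deriv (deriv (fun ξ : ℝ => A * (Real.cosh (b * ξ))⁻¹)) x =
      A * b ^ 2 * ((Real.cosh (b * x))⁻¹ - 2 * ((Real.cosh (b * x))⁻¹) ^ 3) := by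
  have hd1 : deriv (fun ξ : ℝ => A * (Real.cosh (b * ξ))⁻¹) =
      fun x => A * (-(b * Real.sinh (b * x)) / (Real.cosh (b * x)) ^ 2) := by
    funext y
    exact (((chb b y).inv (chne _)).const_mul A).deriv
  rw [hd1]
  have h2 : HasDerivAt (fun x : ℝ => A * (-(b * Real.sinh (b * x)) / (Real.cosh (b * x)) ^ 2))
      (A * ((-(b * (b * Real.cosh (b * x))) * (Real.cosh (b * x)) ^ 2 -
        (-(b * Real.sinh (b * x))) * (2 * (Real.cosh (b * x)) ^ 1 * (b * Real.sinh (b * x)))) /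
        ((Real.cosh (b * x)) ^ 2) ^ 2)) x := by
    have hnum : HasDerivAt (fun x : ℝ => -(b * Real.sinh (b * x))) (-(b * (b * Real.cosh (b * x)))) x := by
      have h := (Real.hasDerivAt_sinh (b * x)).comp x ((hasDerivAt_id x).const_mul b)
      simpa [mul_comm, Function.comp_def, Pi.neg_def] using (h.const_mul b).neg
    exact ((hnum.div ((chb b x).pow 2) (pow_ne_zero 2 (chne _))).const_mul A)
  rw [h2.deriv]
  have hc := chne (b * x)
  have hs : Real.sinh (b * x) ^ 2 = Real.cosh (b * x) ^ 2 - 1 := by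
    have := Real.cosh_sq_sub_sinh_sq (b * x); linarith
  field_simp
  linear_combination 2 * A * b ^ 2 * hs

/-- second derivative of A·sech²(bξ) -/
private lemma dd_sech_sq (b A x : ℝ) :
    deriv (deriv (fun ξ : ℝ => A * ((Real.cosh (b * ξ)) ^ 2)⁻¹)) x =
      A * b ^ 2 * (4 * ((Real.cosh (b * x)) ^ 2)⁻¹ - 6 * (((Real.cosh (b * x)) ^ 2)⁻¹) ^ 2) := by
  have hd1 : deriv (fun ξ : ℝ => A * ((Real.cosh (b * ξ)) ^ 2)⁻¹) =
      fun x => A * (-(2 * b) * (Real.cosh (b * x) * Real.sinh (b * x)) / ((Real.cosh (b * x)) ^ 2) ^ 2) := by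
    funext y
    have h := ((((chb b y).pow 2).inv (pow_ne_zero 2 (chne _))).const_mul A)
    rw [(show HasDerivAt (fun ξ : ℝ => A * ((Real.cosh (b * ξ)) ^ 2)⁻¹) _ y from h).deriv]
    have := chne (b * y)
    field_simp
    simp only [Pi.pow_apply, show (2:ℕ) - 1 = 1 from rfl, pow_one, Nat.cast_ofNat]; ring
  rw [hd1]
  have hnum : HasDerivAt (fun x : ℝ => -(2 * b) * (Real.cosh (b * x) * Real.sinh (b * x)))
      (-(2 * b) * ((b * Real.sinh (b * x)) * Real.sinh (b * x) + Real.cosh (b * x) * (b * Real.cosh (b * x)))) x := by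
    have hs : HasDerivAt (fun ξ : ℝ => Real.sinh (b * ξ)) (b * Real.cosh (b * x)) x := by
      have h := (Real.hasDerivAt_sinh (b * x)).comp x ((hasDerivAt_id x).const_mul b)
      simpa [mul_comm, Function.comp_def] using h
    exact ((chb b x).mul hs).const_mul _
  have hden : HasDerivAt (fun x : ℝ => ((Real.cosh (b * x)) ^ 2) ^ 2)
      (2 * ((Real.cosh (b * x)) ^ 2) ^ 1 * (2 * (Real.cosh (b * x)) ^ 1 * (b * Real.sinh (b * x)))) x :=
    ((chb b x).pow 2).pow 2
  have h2 := (hnum.div hden (pow_ne_zero 2 (pow_ne_zero 2 (chne _)))).const_mul A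
  rw [(show HasDerivAt (fun x : ℝ => A * (-(2 * b) * (Real.cosh (b * x) * Real.sinh (b * x)) / ((Real.cosh (b * x)) ^ 2) ^ 2)) _ x from h2).deriv]
  have hc := chne (b * x)
  have hs : Real.sinh (b * x) ^ 2 = Real.cosh (b * x) ^ 2 - 1 := by
    have := Real.cosh_sq_sub_sinh_sq (b * x); linarith
  field_simp
  linear_combination 6 * A * b ^ 2 * hs

theorem stmt_16 (α c : ℝ) (hc0 : 0 < c ^ 2) (hc1 : c ^ 2 < 1)
    (b a_uu a_vv b_uv A₁ A₂ : ℝ)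
    (hb : b = 1 / Real.sqrt (1 - c ^ 2))
    (hbuv : b_uv ≠ 0)
    (hauu : a_uu = 6 * (b ^ 2 - 1) * b_uv)
    (hA₁ : A₁ = 1 / b_uv)
    (hA₂ : a_vv * b_uv * A₂ ^ 2 = c ^ 2 - α ^ 2 - 4 * b ^ 2 * c ^ 2)
    (u v : ℝ → ℝ)
    (hu : ∀ ξ : ℝ, u ξ = A₁ * (1 / Real.cosh (b * ξ)) ^ 2)
    (hv : ∀ ξ : ℝ, v ξ = A₂ * (1 / Real.cosh (b * ξ))) :
    ∀ ξ : ℝ,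
      (c ^ 2 - α ^ 2) * u ξ - c ^ 2 * deriv (deriv u) ξ =
          a_uu * (u ξ) ^ 2 + a_vv * (v ξ) ^ 2 ∧
        v ξ - (1 - c ^ 2) * deriv (deriv v) ξ = 2 * b_uv * u ξ * v ξ := by
  have h1c : (0:ℝ) < 1 - c ^ 2 := by linarith
  have hsn : Real.sqrt (1 - c ^ 2) ≠ 0 := by positivity
  have hb2 : b ^ 2 * (1 - c ^ 2) = 1 := by
    rw [hb, div_pow, one_pow, Real.sq_sqrt h1c.le]
    field_simp
  have e1 : a_vv * A₂ ^ 2 = (c ^ 2 - α ^ 2 - 4 * b ^ 2 * c ^ 2) * A₁ := by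
    rw [hA₁]; field_simp; linear_combination hA₂
  have e2 : a_uu * A₁ = 6 * c ^ 2 * b ^ 2 := by
    rw [hauu, hA₁]; field_simp; linear_combination hb2
  have e3 : b_uv * A₁ = 1 := by rw [hA₁]; field_simp
  have hU : u = fun ξ : ℝ => A₁ * ((Real.cosh (b * ξ)) ^ 2)⁻¹ := by
    funext ξ; rw [hu ξ, one_div, inv_pow]
  have hV : v = fun ξ : ℝ => A₂ * (Real.cosh (b * ξ))⁻¹ := by
    funext ξ; rw [hv ξ, one_div]
  intro ξ
  rw [hU, hV, dd_sech_sq, dd_sech]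
  set f := (Real.cosh (b * ξ))⁻¹ with hfdef
  set F := ((Real.cosh (b * ξ)) ^ 2)⁻¹ with hFdef
  have hf : f ^ 2 = F := by rw [hfdef, hFdef, inv_pow]
  constructor
  · linear_combination (-F) * e1 - A₁ * F ^ 2 * e2 - a_vv * A₂ ^ 2 * hf
  · linear_combination (2 * A₂ * f ^ 3 - A₂ * f) * hb2 + 2 * A₂ * f * hf -
      2 * A₂ * F * f * e3
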